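/- Let A, B, K, L ∈ ℝ^{n×n} with B and L invertible. If σ_min(KL⁻¹) · σ_min(B⁻¹A) > 1, then for every F ∈ ℝ^{n×n} the Sylvester-like absolute value equation AXK + B|X|L = F has exactly one solution X ∈ ℝ^{n×n}. -/

import Mathlib

open Matrix

/-- Componentwise absolute value of a real matrix. -/
noncomputable def matAbs {n : ℕ} (M : Matrix (Fin n) (Fin n) ℝ) : Matrix (Fin n) (Fin n) ℝ :=
  fun i j => |M i j|

/-- Smallest singular value: the square root of the smallest eigenvalue of MᵀM. -/
noncomputable def sigmaMin {n : ℕ} (M : Matrix (Fin n) (Fin n) ℝ) : ℝ :=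
  Real.sqrt (sInf (spectrum ℝ (Mᵀ * M)))

section Aux

attribute [local instance] Matrix.frobeniusNormedAddCommGroup Matrix.frobeniusNormedSpace

variable {n : ℕ}

private lemma frob_norm_eq (A : Matrix (Fin n) (Fin n) ℝ) :
    ‖A‖ = Real.sqrt (∑ i, ∑ j, (A i j)^2) := by
  rw [frobenius_norm_def, Real.sqrt_eq_rpow]
  congr 1
  refine Finset.sum_congr rfl fun i _ => Finset.sum_congr rfl fun j _ => ?_
  rw [Real.rpow_two, Real.norm_eq_abs, sq_abs]

private lemma rayleigh [NeZero n] (M : Matrix (Fin n) (Fin n) ℝ) (x : Fin n → ℝ) :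
    sInf (spectrum ℝ (Mᵀ * M)) * (x ⬝ᵥ x) ≤ (M *ᵥ x) ⬝ᵥ (M *ᵥ x) := by
  have hconj : Mᴴ = Mᵀ := conjTranspose_eq_transpose_of_trivial M
  have hH : (Mᵀ * M).IsHermitian := by
    rw [← hconj]; exact isHermitian_conjTranspose_mul_self M
  set c := sInf (spectrum ℝ (Mᵀ * M)) with hc
  have hle : ∀ i, c ≤ hH.eigenvalues i := fun i =>
    csInf_le (Matrix.finite_real_spectrum (𝕜 := ℝ)).bddBelow
      (hH.eigenvalues_mem_spectrum_real i)
  set U : Matrix (Fin n) (Fin n) ℝ := (hH.eigenvectorUnitary : Matrix (Fin n) (Fin n) ℝ) with hU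
  have hUU : U * star U = 1 := (Matrix.mem_unitaryGroup_iff).mp (hH.eigenvectorUnitary).2
  have hst : Mᵀ * M = U * diagonal (RCLike.ofReal ∘ hH.eigenvalues) * star U :=
    hH.spectral_theorem
  have hdiag : (diagonal (fun i => hH.eigenvalues i - c)).PosSemidef :=
    posSemidef_diagonal_iff.mpr fun i => sub_nonneg.mpr (hle i)
  have hPSD : (Mᵀ * M - c • 1).PosSemidef := by
    have h2 := hdiag.mul_mul_conjTranspose_same U
    have e : U * (diagonal fun i => hH.eigenvalues i - c) * Uᴴ = Mᵀ * M - c • (1 : Matrix (Fin n) (Fin n) ℝ) := by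
      rw [Matrix.star_eq_conjTranspose] at hst
      have : (diagonal fun i => hH.eigenvalues i - c) =
          diagonal (RCLike.ofReal ∘ hH.eigenvalues) - c • (1 : Matrix (Fin n) (Fin n) ℝ) := by
        rw [smul_one_eq_diagonal, ← diagonal_sub]
        congr 1
      rw [this, Matrix.mul_sub, Matrix.sub_mul, ← hst]
      congr 1
      have : U * (c • (1 : Matrix (Fin n) (Fin n) ℝ)) * Uᴴ = c • (U * Uᴴ) := by
        simp [Matrix.mul_smul, Matrix.smul_mul]
      rw [this]
      rw [show U * Uᴴ = 1 from hUU]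
    rwa [e] at h2
  have hx := hPSD.dotProduct_mulVec_nonneg x
  have hstar : star x = x := funext fun i => rfl
  rw [hstar, sub_mulVec] at hx
  have h1 : (c • (1 : Matrix (Fin n) (Fin n) ℝ)) *ᵥ x = c • x := by
    simp [smul_mulVec]
  rw [h1, dotProduct_sub, dotProduct_smul] at hx
  have h2 : x ⬝ᵥ ((Mᵀ * M) *ᵥ x) = (M *ᵥ x) ⬝ᵥ (M *ᵥ x) := by
    rw [← mulVec_mulVec, dotProduct_mulVec, vecMul_transpose]
  rw [h2] at hx
  have : c • (x ⬝ᵥ x) = c * (x ⬝ᵥ x) := rfl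
  linarith [hx]

private lemma spec_nonneg [NeZero n] (M : Matrix (Fin n) (Fin n) ℝ) :
    0 ≤ sInf (spectrum ℝ (Mᵀ * M)) := by
  have hconj : Mᴴ = Mᵀ := conjTranspose_eq_transpose_of_trivial M
  have hH : (Mᵀ * M).IsHermitian := by
    rw [← hconj]; exact isHermitian_conjTranspose_mul_self M
  have hPSD : (Mᵀ * M).PosSemidef := by
    rw [← hconj]; exact posSemidef_conjTranspose_mul_self M
  refine le_csInf ?_ fun b hb => ?_
  · rw [hH.spectrum_real_eq_range_eigenvalues]
    exact Set.range_nonempty _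
  · rw [hH.spectrum_real_eq_range_eigenvalues] at hb
    obtain ⟨i, rfl⟩ := hb
    exact hPSD.eigenvalues_nonneg i

private lemma sigma_mul_le [NeZero n] (M Z : Matrix (Fin n) (Fin n) ℝ) :
    sigmaMin M * ‖Z‖ ≤ ‖M * Z‖ := by
  have hc := spec_nonneg M
  rw [frob_norm_eq, frob_norm_eq, sigmaMin, ← Real.sqrt_mul hc]
  apply Real.sqrt_le_sqrt
  calc sInf (spectrum ℝ (Mᵀ * M)) * ∑ i, ∑ j, (Z i j)^2
      = ∑ j, sInf (spectrum ℝ (Mᵀ * M)) * ((fun k => Z k j) ⬝ᵥ (fun k => Z k j)) := by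
        rw [Finset.sum_comm (γ := Fin n), Finset.mul_sum]
        refine Finset.sum_congr rfl fun j _ => ?_
        congr 1
        simp [dotProduct, pow_two]
    _ ≤ ∑ j, (M *ᵥ (fun k => Z k j)) ⬝ᵥ (M *ᵥ (fun k => Z k j)) :=
        Finset.sum_le_sum fun j _ => rayleigh M _
    _ = ∑ i, ∑ j, ((M * Z) i j)^2 := by
        rw [Finset.sum_comm (γ := Fin n)]
        refine Finset.sum_congr rfl fun j _ => ?_
        simp [dotProduct, Matrix.mulVec, Matrix.mul_apply, pow_two]

private lemma sigmaMin_transpose (M : Matrix (Fin n) (Fin n) ℝ) (hM : IsUnit M) :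
    sigmaMin Mᵀ = sigmaMin M := by
  have hd : IsUnit M.det := (isUnit_iff_isUnit_det M).mp hM
  unfold sigmaMin
  rw [transpose_transpose]
  congr 2
  have h2 := spectrum.units_conjugate (R := ℝ) (a := Mᵀ * M) (u := hM.unit)
  rw [← h2]
  rw [Matrix.coe_units_inv, IsUnit.unit_spec]
  rw [← Matrix.mul_assoc, Matrix.mul_assoc (M * Mᵀ),
    Matrix.mul_nonsing_inv M hd, Matrix.mul_one]

private lemma sigma_mul_le_right [NeZero n] (Q Z : Matrix (Fin n) (Fin n) ℝ) (hQ : IsUnit Q) :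
    sigmaMin Q * ‖Z‖ ≤ ‖Z * Q‖ := by
  have h := sigma_mul_le Qᵀ Zᵀ
  rw [sigmaMin_transpose Q hQ, frobenius_norm_transpose, ← transpose_mul,
    frobenius_norm_transpose] at h
  exact h

private lemma isUnit_of_sigma [NeZero n] (M : Matrix (Fin n) (Fin n) ℝ)
    (hs : 0 < sigmaMin M) : IsUnit M := by
  have hc : 0 < sInf (spectrum ℝ (Mᵀ * M)) := Real.sqrt_pos.mp hs
  rw [← Matrix.mulVec_injective_iff_isUnit]
  intro x y hxy
  have hz : M *ᵥ (x - y) = 0 := by rw [mulVec_sub, hxy, sub_self]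
  have h := rayleigh M (x - y)
  rw [hz] at h
  have h0 : (0 : Fin n → ℝ) ⬝ᵥ 0 = 0 := zero_dotProduct 0
  rw [h0] at h
  have hd0 : (x - y) ⬝ᵥ (x - y) = 0 := by
    have hnn : 0 ≤ (x - y) ⬝ᵥ (x - y) := by
      simp only [dotProduct, ← pow_two]
      positivity
    nlinarith
  have := dotProduct_self_eq_zero.mp hd0
  exact sub_eq_zero.mp this

private lemma abs_diff_le (X Y : Matrix (Fin n) (Fin n) ℝ) :
    ‖matAbs X - matAbs Y‖ ≤ ‖X - Y‖ := by
  rw [frob_norm_eq, frob_norm_eq]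
  apply Real.sqrt_le_sqrt
  refine Finset.sum_le_sum fun i _ => Finset.sum_le_sum fun j _ => ?_
  have h1 : |(|X i j| - |Y i j|)| ≤ |X i j - Y i j| := abs_abs_sub_abs_le_abs_sub _ _
  have h2 : ((matAbs X - matAbs Y) i j) = |X i j| - |Y i j| := by
    simp [matAbs, Matrix.sub_apply]
  have h3 : ((X - Y) i j) = X i j - Y i j := by simp [Matrix.sub_apply]
  rw [h2, h3, ← sq_abs (|X i j| - |Y i j|), ← sq_abs (X i j - Y i j)]
  exact pow_le_pow_left₀ (abs_nonneg _) h1 2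

/-- If B and L are invertible and σ_min(KL⁻¹)·σ_min(B⁻¹A) > 1, then for every F
the Sylvester-like AVE AXK + B|X|L = F has exactly one solution. -/
theorem sylvester_ave_unique {n : ℕ} (A B K L : Matrix (Fin n) (Fin n) ℝ)
    (hB : IsUnit B) (hL : IsUnit L)
    (h : 1 < sigmaMin (K * L⁻¹) * sigmaMin (B⁻¹ * A)) :
    ∀ F : Matrix (Fin n) (Fin n) ℝ,
      ∃! X : Matrix (Fin n) (Fin n) ℝ, A * X * K + B * matAbs X * L = F := by
  intro F
  rcases Nat.eq_zero_or_pos n with hn | hn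
  · subst hn
    haveI : Subsingleton (Matrix (Fin 0) (Fin 0) ℝ) :=
      ⟨fun a b => by ext i j; exact i.elim0⟩
    exact ⟨0, Subsingleton.elim _ _, fun y _ => Subsingleton.elim _ _⟩
  haveI : NeZero n := ⟨hn.ne'⟩
  set P := B⁻¹ * A with hPdef
  set Q := K * L⁻¹ with hQdef
  have hσQ0 : 0 ≤ sigmaMin Q := Real.sqrt_nonneg _
  have hσP0 : 0 ≤ sigmaMin P := Real.sqrt_nonneg _
  have hσP : 0 < sigmaMin P := by nlinarith
  have hσQ : 0 < sigmaMin Q := by nlinarith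
  have hPu : IsUnit P := isUnit_of_sigma P hσP
  have hQu : IsUnit Q := isUnit_of_sigma Q hσQ
  have hPd : IsUnit P.det := (isUnit_iff_isUnit_det P).mp hPu
  have hQd : IsUnit Q.det := (isUnit_iff_isUnit_det Q).mp hQu
  have hBd : IsUnit B.det := (isUnit_iff_isUnit_det B).mp hB
  have hLd : IsUnit L.det := (isUnit_iff_isUnit_det L).mp hL
  set F' := B⁻¹ * F * L⁻¹ with hF'def
  set g : Matrix (Fin n) (Fin n) ℝ → Matrix (Fin n) (Fin n) ℝ :=
    fun X => P⁻¹ * (F' - matAbs X) * Q⁻¹ with hgdef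
  have e1 : ∀ X : Matrix (Fin n) (Fin n) ℝ, B⁻¹ * (A * X * K) * L⁻¹ = P * X * Q := by
    intro X; simp [hPdef, hQdef, Matrix.mul_assoc]
  have e2 : ∀ M : Matrix (Fin n) (Fin n) ℝ, B⁻¹ * (B * M * L) * L⁻¹ = M := by
    intro M
    simp [Matrix.mul_assoc, Matrix.mul_nonsing_inv _ hLd,
      Matrix.nonsing_inv_mul_cancel_left _ _ hBd]
  have e3 : ∀ X : Matrix (Fin n) (Fin n) ℝ, B * (P * X * Q) * L = A * X * K := by
    intro X
    simp [hPdef, hQdef, Matrix.mul_assoc, Matrix.nonsing_inv_mul _ hLd,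
      Matrix.mul_nonsing_inv_cancel_left _ _ hBd]
  have e4 : B * F' * L = F := by
    simp [hF'def, Matrix.mul_assoc, Matrix.nonsing_inv_mul _ hLd,
      Matrix.mul_nonsing_inv_cancel_left _ _ hBd]
  have key : ∀ X, (A * X * K + B * matAbs X * L = F) ↔ Function.IsFixedPt g X := by
    intro X
    have step1 : (A * X * K + B * matAbs X * L = F) ↔ P * X * Q + matAbs X = F' := by
      constructor
      · intro hEq
        calc P * X * Q + matAbs X
            = B⁻¹ * (A * X * K + B * matAbs X * L) * L⁻¹ := by
              rw [Matrix.mul_add, Matrix.add_mul, e1, e2]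
          _ = F' := by rw [hEq]
      · intro hEq
        calc A * X * K + B * matAbs X * L
            = B * (P * X * Q + matAbs X) * L := by
              rw [Matrix.mul_add, Matrix.add_mul, e3]
          _ = F := by rw [hEq, e4]
    rw [step1]
    constructor
    · intro hEq
      have hs : P * X * Q = F' - matAbs X := eq_sub_of_add_eq hEq
      show g X = X
      rw [hgdef]
      simp only [← hs]
      simp [Matrix.mul_assoc, Matrix.mul_nonsing_inv _ hQd,
        Matrix.nonsing_inv_mul_cancel_left _ _ hPd]
    · intro hFix
      have hgx : P * (g X) * Q = F' - matAbs X := by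
        rw [hgdef]
        simp [Matrix.mul_assoc, Matrix.nonsing_inv_mul _ hQd,
          Matrix.mul_nonsing_inv_cancel_left _ _ hPd]
      rw [hFix] at hgx
      rw [hgx, sub_add_cancel]
  -- contraction
  set κ : ℝ := (sigmaMin Q * sigmaMin P)⁻¹ with hκdef
  have hκ0 : 0 ≤ κ := by positivity
  have hκ1 : κ < 1 := by
    rw [hκdef]
    exact inv_lt_one_of_one_lt₀ h
  have hbound : ∀ W : Matrix (Fin n) (Fin n) ℝ, ‖P⁻¹ * W * Q⁻¹‖ ≤ κ * ‖W‖ := by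
    intro W
    set Zm := P⁻¹ * W * Q⁻¹ with hZm
    have e5 : P * (Zm * Q) = W := by
      rw [hZm]
      simp [Matrix.mul_assoc, Matrix.nonsing_inv_mul _ hQd,
        Matrix.mul_nonsing_inv_cancel_left _ _ hPd]
    have h1 : sigmaMin Q * ‖Zm‖ ≤ ‖Zm * Q‖ := sigma_mul_le_right Q Zm hQu
    have h2 : sigmaMin P * ‖Zm * Q‖ ≤ ‖P * (Zm * Q)‖ := sigma_mul_le P (Zm * Q)
    rw [e5] at h2
    have h3 : sigmaMin Q * sigmaMin P * ‖Zm‖ ≤ ‖W‖ := by nlinarith [norm_nonneg (Zm * Q)]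
    have hpos : 0 < sigmaMin Q * sigmaMin P := by nlinarith
    rw [hκdef]
    rw [← mul_le_mul_iff_right₀ hpos]
    calc (sigmaMin Q * sigmaMin P) * ‖Zm‖ ≤ ‖W‖ := h3
      _ = (sigmaMin Q * sigmaMin P) * ((sigmaMin Q * sigmaMin P)⁻¹ * ‖W‖) := by
          field_simp
  have hgsub : ∀ X Y, g X - g Y = P⁻¹ * (matAbs Y - matAbs X) * Q⁻¹ := by
    intro X Y
    rw [hgdef]
    simp only [← Matrix.sub_mul, ← Matrix.mul_sub]
    congr 2
    abel
  have hLip : LipschitzWith ⟨κ, hκ0⟩ g := by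
    apply LipschitzWith.of_dist_le_mul
    intro X Y
    rw [dist_eq_norm, dist_eq_norm, hgsub]
    calc ‖P⁻¹ * (matAbs Y - matAbs X) * Q⁻¹‖ ≤ κ * ‖matAbs Y - matAbs X‖ := hbound _
      _ ≤ κ * ‖X - Y‖ := by
          have := abs_diff_le Y X
          have h5 : ‖Y - X‖ = ‖X - Y‖ := norm_sub_rev Y X
          nlinarith
  have hCW : ContractingWith ⟨κ, hκ0⟩ g := ⟨by exact_mod_cast hκ1, hLip⟩
  refine ⟨hCW.fixedPoint, (key _).mpr hCW.fixedPoint_isFixedPt, fun Y hY => ?_⟩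
  exact hCW.fixedPoint_unique ((key Y).mp hY)

end Aux
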